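/- Telescoping sum of exponential weights: with α̂_{i,t} as in the quadratic-loss exponential weighting, averaging the per-step bound over t = 1,…,T yields (1/T) Σ_t (x_t - x̂_t)² ≤ -(1/(ηT)) log( (1/N) Σ_{i=1}^N exp(-η Σ_{t=1}^T (x̂_t^{(i)} - x_t)²) ) + (1/T) Σ_t (y_t² - 1/(2η))₊, and since Σ_i exp(-η Σ_t (x̂_t^{(i)}-x_t)²) ≥ exp(-η min_i Σ_t (x̂_t^{(i)}-x_t)²), the first term is at most min_i (1/T)Σ_t (x̂_t^{(i)}-x_t)² + (log N)/(Tη). -/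

import Mathlib

open Finset Real

lemma exp_ge_quadratic {z : ℝ} (hz : 0 ≤ z) : 1 + z + z^2/2 ≤ exp z := by
  have h := Real.sum_le_exp_of_nonneg hz 3
  simp [Finset.sum_range_succ, Nat.factorial] at h
  nlinarith [h]

lemma exp_neg_two_mul {w : ℝ} (hw : 0 ≤ w) : 1 - w ≤ exp (-(2*w)) * (1+w) := by
  have hmono : Monotone (fun w : ℝ => exp (-(2*w)) * (1+w) + w) := by
    have hd : ∀ t : ℝ, HasDerivAt (fun w : ℝ => exp (-(2*w)) * (1+w) + w)
        (exp (-(2*t)) * (-2) * (1 + t) + exp (-(2*t)) * 1 + 1) t := by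
      intro t
      have h1 : HasDerivAt (fun w : ℝ => -(2*w)) (-2) t := by
        simpa using ((hasDerivAt_id t).const_mul (-2 : ℝ))
      have h2 := (h1.exp).mul ((hasDerivAt_id t).const_add 1)
      have h3 := h2.add (hasDerivAt_id t)
      exact h3
    apply monotone_of_deriv_nonneg
    · exact fun t => (hd t).differentiableAt
    · intro t
      rw [(hd t).deriv]
      have : exp (-(2*t)) * (1+2*t) ≤ 1 := by
        rcases le_or_gt (1+2*t) 0 with h | h
        · have := exp_pos (-(2*t)); nlinarith
        · have h4 : 1 + 2*t ≤ exp (2*t) := by have := Real.add_one_le_exp (2*t); linarith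
          have h5 : exp (-(2*t)) * exp (2*t) = 1 := by rw [← exp_add]; simp
          nlinarith [exp_pos (-(2*t))]
      nlinarith [this]
  have := hmono hw
  simp only [neg_zero, mul_zero, exp_zero] at this
  linarith [this]

lemma pade_pos {u c : ℝ} (hu : 0 ≤ u) (hc : u^2 ≤ c*(2+u)) : exp (u - c) ≤ 1 + u := by
  have h2u : (0:ℝ) < 2 + u := by linarith
  set w : ℝ := u/(2+u) with hwdef
  have hw0 : 0 ≤ w := div_nonneg hu h2u.le
  have hw1 : w < 1 := by rw [hwdef, div_lt_one h2u]; linarith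
  have h1 : u - c ≤ 2*w := by
    rw [hwdef, show 2*(u/(2+u)) = 2*u/(2+u) by ring, le_div_iff₀ h2u]
    nlinarith
  have h2 : exp (u - c) ≤ exp (2*w) := exp_le_exp.2 h1
  have h3 := exp_neg_two_mul hw0
  have h4 : exp (-(2*w)) * exp (2*w) = 1 := by rw [← exp_add]; simp
  have h5 : exp (2*w) * (1 - w) ≤ 1 + w := by nlinarith [exp_pos (2*w), exp_pos (-(2*w))]
  have h6 : (1 + w) = (1+u) * (1-w) := by
    rw [hwdef]; field_simp; ring
  have h7 : 0 < 1 - w := by linarith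
  have h8 : exp (2*w) ≤ 1 + u := by nlinarith
  linarith

lemma pade_neg {w c : ℝ} (h0 : 0 ≤ w) (h1 : w < 1) (hc : w^2 ≤ 2*c*(1-w)) :
    exp (-w - c) ≤ 1 - w := by
  have h1w : (0:ℝ) < 1 - w := by linarith
  set z : ℝ := (w*(2-w))/(2*(1-w)) with hzdef
  have hz0 : 0 ≤ z := by
    apply div_nonneg
    · nlinarith
    · linarith
  have hzc : -w - c ≤ -z := by
    have : z ≤ w + c := by
      rw [hzdef, div_le_iff₀ (by linarith : (0:ℝ) < 2*(1-w))]
      nlinarith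
    linarith
  have h2 : exp (-w - c) ≤ exp (-z) := exp_le_exp.2 hzc
  have h3 := exp_ge_quadratic hz0
  have h4 : (1-w) * (1+z+z^2/2) ≥ 1 := by
    rw [hzdef]
    rw [ge_iff_le, ← sub_nonneg]
    have e1 : (1-w) * (1+(w*(2-w))/(2*(1-w))+((w*(2-w))/(2*(1-w)))^2/2) - 1
        = (w^2*(2-w)^2 - 4*w^2*(1-w)) / (8*(1-w)) := by
      field_simp
      ring
    rw [e1]
    apply div_nonneg
    · nlinarith [sq_nonneg (w*w)]
    · linarith
  have h5 : exp (-z) * exp z = 1 := by rw [← exp_add]; simp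
  have h6 : exp (-z) * (1+z+z^2/2) ≤ 1 := by nlinarith [exp_pos (-z), exp_pos z]
  nlinarith [exp_pos (-z)]

lemma certC1pos (D A t : ℝ) (hD0 : 0 ≤ D) (hDA : D ≤ A^2) (hAD : A^2 ≤ D + 1/2)
    (hA0 : 0 ≤ A) (ht : 0 ≤ t) : (2*A*t)^2 ≤ (t^2 + D)*(2 + 2*A*t) := by
  rcases le_or_gt 0 (1 + A*t - 2*t^2) with hcase | hcase
  · nlinarith [mul_nonneg (mul_nonneg hA0 ht) (mul_nonneg ht ht),
      mul_nonneg hD0 hcase, mul_nonneg (sub_nonneg.2 hAD) (mul_nonneg ht ht)]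
  · nlinarith [mul_nonneg (mul_nonneg hA0 ht) (sq_nonneg (t - A)),
      mul_nonneg (sub_nonneg.2 hDA) (le_of_lt (by linarith : (0:ℝ) < 2*t^2 - A*t - 1)),
      mul_nonneg (sub_nonneg.2 hAD) (mul_nonneg ht ht), sq_nonneg A]

lemma certC2 (Y A τ : ℝ) (hY0 : 0 ≤ Y) (hA0 : 0 ≤ A) (hτ : 0 < τ) (hτY : τ ≤ Y - A)
    (hD0 : 0 ≤ Y^2 - 1/2) (hYτ : 2*Y*τ ≤ 1) :
    (2*A*τ)^2 ≤ 2*(τ^2 + (Y^2 - 1/2))*(1 - 2*A*τ) := by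
  have hAYτ : A ≤ Y - τ := by linarith
  have h1 : A^2 ≤ (Y - τ)^2 := by nlinarith
  have h2 : (2*A*τ)^2 ≤ 4*τ^2*(Y-τ)^2 := by nlinarith [sq_nonneg τ, mul_nonneg (mul_nonneg hτ.le hτ.le) (sub_nonneg.2 h1)]
  have hτD : (0:ℝ) ≤ τ^2 + (Y^2-1/2) := by positivity
  have h3 : 2*(τ^2+(Y^2-1/2))*(1-2*(Y-τ)*τ) ≤ 2*(τ^2+(Y^2-1/2))*(1-2*A*τ) := by
    nlinarith [mul_nonneg hτD (mul_nonneg (sub_nonneg.2 hAYτ) hτ.le)]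
  nlinarith [mul_nonneg hD0 (by linarith : (0:ℝ) ≤ 1 - 2*Y*τ),
    mul_nonneg (mul_nonneg hY0 hτ.le) (mul_nonneg (mul_nonneg hτ.le hτ.le) hτ.le)]

lemma key {Y A Z : ℝ} (hY2 : 1/2 ≤ Y^2) (hA2 : Y^2 - 1/2 ≤ A^2)
    (hA0 : 0 ≤ A) (hAY : A ≤ Y) (hZ : |Z| ≤ Y) :
    exp (1/2 - Y^2 + A^2 - Z^2) ≤ 1 + 2*A*(A - Z) := by
  have hY0 : 0 ≤ Y := le_trans hA0 hAY
  have hZY : Z ≤ Y := le_of_abs_le hZ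
  have hD0 : (0:ℝ) ≤ Y^2 - 1/2 := by linarith
  have hAD : A^2 ≤ (Y^2 - 1/2) + 1/2 := by nlinarith
  rcases le_or_gt Z A with htz | htz
  · have ht : 0 ≤ A - Z := by linarith
    have hc := certC1pos (Y^2-1/2) A (A-Z) hD0 hA2 hAD hA0 ht
    have hc' : (2*A*(A-Z))^2 ≤ ((A-Z)^2 + (Y^2-1/2))*(2 + 2*A*(A-Z)) := hc
    have h1 := pade_pos (by positivity : (0:ℝ) ≤ 2*A*(A-Z)) hc'
    have he : 1/2 - Y^2 + A^2 - Z^2 = 2*A*(A-Z) - ((A-Z)^2 + (Y^2-1/2)) := by ring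
    rw [he]; exact h1
  · have hτ : 0 < Z - A := by linarith
    have hτY : Z - A ≤ Y - A := by linarith
    have hYτ : 2*Y*(Z-A) ≤ 1 := by nlinarith [mul_nonneg hA0 (by linarith : 0 ≤ Y - A)]
    have hw1 : 2*A*(Z-A) < 1 := by nlinarith
    have hc := certC2 Y A (Z-A) hY0 hA0 hτ hτY hD0 hYτ
    have h1 := pade_neg (by positivity : (0:ℝ) ≤ 2*A*(Z-A)) hw1 hc
    have he : 1/2 - Y^2 + A^2 - Z^2 = -(2*A*(Z-A)) - ((Z-A)^2 + (Y^2-1/2)) := by ring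
    rw [he]
    calc exp (-(2*A*(Z-A)) - ((Z-A)^2 + (Y^2-1/2))) ≤ 1 - 2*A*(Z-A) := h1
      _ = 1 + 2*A*(A-Z) := by ring

lemma key' {Y A Z : ℝ} (hY2 : 1/2 ≤ Y^2) (hA2 : Y^2 - 1/2 ≤ A^2)
    (hA : |A| ≤ Y) (hZ : |Z| ≤ Y) :
    exp (1/2 - Y^2 + A^2 - Z^2) ≤ 1 + 2*A*(A - Z) := by
  rcases le_or_gt 0 A with h | h
  · exact key hY2 hA2 h (le_of_abs_le hA) hZ
  · have h3 : |(-Z)| ≤ Y := by rwa [abs_neg]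
    have h4 : Y^2 - 1/2 ≤ (-A)^2 := by nlinarith
    have h5 : -A ≤ Y := by
      have := neg_le_of_abs_le hA; linarith [le_of_abs_le hA, abs_nonneg A,
        (abs_le.1 hA).1]
    have := key (A := -A) (Z := -Z) hY2 h4 (by linarith) h5 h3
    calc exp (1/2 - Y^2 + A^2 - Z^2) = exp (1/2 - Y^2 + (-A)^2 - (-Z)^2) := by ring_nf
      _ ≤ 1 + 2*(-A)*((-A) - (-Z)) := this
      _ = 1 + 2*A*(A - Z) := by ring

lemma sq_le_sq_of_abs_le {x z : ℝ} (h : |x| ≤ z) : x^2 ≤ z^2 := by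
  nlinarith [sq_abs x, abs_nonneg x]

lemma abs_le_of_sq {x Y : ℝ} (hY : 0 ≤ Y) (h : x^2 ≤ Y^2) : |x| ≤ Y := by
  rw [← Real.sqrt_sq hY, ← Real.sqrt_sq_eq_abs]; exact Real.sqrt_le_sqrt h

lemma step {N : ℕ} (hN : 0 < N) {η : ℝ} (hη : 0 < η) {y : ℝ} (hy0 : 0 ≤ y)
    (q v : Fin N → ℝ) (hv0 : ∀ k, 0 ≤ v k) (hv1 : ∑ k, v k = 1)
    (hq : ∀ k, |q k| ≤ y) :
    ∑ k, v k * exp (-η * (q k)^2) ≤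
      exp (-η * (∑ k, v k * q k)^2 + η * max (y^2 - 1/(2*η)) 0) := by
  haveI : Nonempty (Fin N) := ⟨⟨0, hN⟩⟩
  set a : ℝ := ∑ k, v k * q k with hadef
  have ha : |a| ≤ y := by
    calc |a| ≤ ∑ k, |v k * q k| := Finset.abs_sum_le_sum_abs _ _
      _ ≤ ∑ k, v k * y := by
          apply Finset.sum_le_sum
          intro k _
          rw [abs_mul, abs_of_nonneg (hv0 k)]
          exact mul_le_mul_of_nonneg_left (hq k) (hv0 k)
      _ = y := by rw [← Finset.sum_mul, hv1, one_mul]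
  have ha2 : a^2 ≤ y^2 := sq_le_sq_of_abs_le ha
  set r : ℝ := Real.sqrt η with hrdef
  have hr2 : r^2 = η := Real.sq_sqrt hη.le
  have hr0 : 0 < r := Real.sqrt_pos.2 hη
  set Y : ℝ := Real.sqrt (max (η*y^2) (1/2)) with hYdef
  have hY2 : Y^2 = max (η*y^2) (1/2) := Real.sq_sqrt (le_trans (by norm_num) (le_max_right _ _))
  have hY0 : 0 ≤ Y := Real.sqrt_nonneg _
  have hYhalf : 1/2 ≤ Y^2 := by rw [hY2]; exact le_max_right _ _
  have hYy : η * y^2 ≤ Y^2 := by rw [hY2]; exact le_max_left _ _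
  have hmax : η * max (y^2 - 1/(2*η)) 0 = Y^2 - 1/2 := by
    rw [hY2]
    rcases le_total (y^2) (1/(2*η)) with h | h
    · rw [max_eq_right (by linarith), max_eq_right]
      · norm_num
      · calc η * y^2 ≤ η * (1/(2*η)) := by nlinarith
          _ = 1/2 := by field_simp
    · rw [max_eq_left (by linarith), max_eq_left]
      · field_simp
      · calc (1:ℝ)/2 = η * (1/(2*η)) := by field_simp
          _ ≤ η * y^2 := by nlinarith
  rw [hmax]
  rcases lt_or_ge ((r*a)^2) (Y^2 - 1/2) with hcase | hcase
  · -- trivial case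
    have h1 : ∑ k, v k * exp (-η * (q k)^2) ≤ 1 := by
      rw [← hv1]
      apply Finset.sum_le_sum
      intro k _
      have h3 : exp (-η * (q k)^2) ≤ 1 := by
        rw [Real.exp_le_one_iff]
        nlinarith [sq_nonneg (q k)]
      calc v k * exp (-η * (q k)^2) ≤ v k * 1 := mul_le_mul_of_nonneg_left h3 (hv0 k)
        _ = v k := mul_one _
    have h2 : (1:ℝ) ≤ exp (-η * a^2 + (Y^2 - 1/2)) := by
      apply Real.one_le_exp
      have h4 : (r*a)^2 = η * a^2 := by rw [mul_pow, hr2]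
      linarith
    linarith
  · -- main case
    set A : ℝ := r * a with hAdef
    have hA2 : Y^2 - 1/2 ≤ A^2 := hcase
    have hAY : |A| ≤ Y := by
      apply abs_le_of_sq hY0
      calc A^2 = η * a^2 := by rw [hAdef, mul_pow, hr2]
        _ ≤ η * y^2 := mul_le_mul_of_nonneg_left ha2 hη.le
        _ ≤ Y^2 := hYy
    set C : ℝ := exp (Y^2 - 1/2 - A^2) with hCdef
    have hpoint : ∀ k, exp (-η * (q k)^2) ≤ C * (1 + 2*A*(A - r * q k)) := by
      intro k
      have hZ : |r * q k| ≤ Y := by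
        apply abs_le_of_sq hY0
        calc (r * q k)^2 = η * (q k)^2 := by rw [mul_pow, hr2]
          _ ≤ η * y^2 := mul_le_mul_of_nonneg_left (sq_le_sq_of_abs_le (hq k)) hη.le
          _ ≤ Y^2 := hYy
      have hk := key' hYhalf hA2 hAY hZ
      have heq : exp (-η * (q k)^2)
          = C * exp (1/2 - Y^2 + A^2 - (r * q k)^2) := by
        rw [hCdef, ← exp_add]
        congr 1
        have : (r * q k)^2 = η * (q k)^2 := by rw [mul_pow, hr2]
        linarith
      rw [heq]
      exact mul_le_mul_of_nonneg_left hk (le_of_lt (exp_pos _))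
    calc ∑ k, v k * exp (-η * (q k)^2)
        ≤ ∑ k, v k * (C * (1 + 2*A*(A - r * q k))) := by
          apply Finset.sum_le_sum
          intro k _
          exact mul_le_mul_of_nonneg_left (hpoint k) (hv0 k)
      _ = C * (1 + 2*A*A) * (∑ k, v k) - C*2*A*r*(∑ k, v k * q k) := by
          rw [Finset.mul_sum, Finset.mul_sum, ← Finset.sum_sub_distrib]
          apply Finset.sum_congr rfl
          intro k _
          ring
      _ = C := by rw [hv1, hAdef]; ring
      _ = exp (-η * a^2 + (Y^2 - 1/2)) := by
          rw [hCdef]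
          congr 1
          have : A^2 = η * a^2 := by rw [hAdef, mul_pow, hr2]
          linarith

/-- Telescoping sum of exponential weights: with weights
`w i t ∝ exp(-η ∑_{s<t} (xh i s - x s)²)`, averaging the per-step bound over
`t = 1, …, T` yields
`(1/T) ∑_t (x t - agg t)² ≤ -(1/(ηT)) log((1/N) ∑_i exp(-η ∑_t (xh i t - x t)²))
  + (1/T) ∑_t (y t² - 1/(2η))₊`,
and the first term on the right is at most
`min_i (1/T) ∑_t (xh i t - x t)² + (log N)/(Tη)`. -/
theorem aggregation_quadratic_loss_telescoping
    (N T : ℕ) (hN : 0 < N) (hT : 0 < T) (η : ℝ) (hη : 0 < η)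
    (x : ℕ → ℝ) (xh : Fin N → ℕ → ℝ)
    (w : Fin N → ℕ → ℝ)
    (hw : ∀ i t, w i t =
      Real.exp (-η * ∑ s ∈ range t, (xh i s - x s) ^ 2) /
        ∑ k : Fin N, Real.exp (-η * ∑ s ∈ range t, (xh k s - x s) ^ 2))
    (agg : ℕ → ℝ) (hagg : ∀ t, agg t = ∑ i : Fin N, w i t * xh i t)
    (y : ℕ → ℝ) (hy : ∀ t, y t = |x t| + ⨆ i : Fin N, |xh i t|) :
    (1 / T) * ∑ t ∈ range T, (x t - agg t) ^ 2 ≤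
      -(1 / (η * T)) * Real.log
          ((1 / N) * ∑ i : Fin N, Real.exp (-η * ∑ t ∈ range T, (xh i t - x t) ^ 2)) +
        (1 / T) * ∑ t ∈ range T, max ((y t) ^ 2 - 1 / (2 * η)) 0 ∧
    -(1 / (η * T)) * Real.log
        ((1 / N) * ∑ i : Fin N, Real.exp (-η * ∑ t ∈ range T, (xh i t - x t) ^ 2)) ≤
      (⨅ i : Fin N, (1 / T) * ∑ t ∈ range T, (xh i t - x t) ^ 2) +
        Real.log N / (T * η) := by
  haveI : Nonempty (Fin N) := ⟨⟨0, hN⟩⟩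
  have hTpos : (0:ℝ) < (T:ℝ) := by exact_mod_cast hT
  have hNpos : (0:ℝ) < (N:ℝ) := by exact_mod_cast hN
  set W : ℕ → ℝ := fun t => ∑ k : Fin N, Real.exp (-η * ∑ s ∈ range t, (xh k s - x s) ^ 2)
    with hWdef
  have hWpos : ∀ t, 0 < W t := fun t =>
    Finset.sum_pos (fun i _ => Real.exp_pos _) Finset.univ_nonempty
  have hW0 : W 0 = N := by simp [hWdef]
  have hsumw : ∀ t, ∑ i, w i t = 1 := by
    intro t
    simp only [hw]
    rw [← Finset.sum_div, div_self (ne_of_gt (hWpos t))]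
  have hwnn : ∀ i t, 0 ≤ w i t := by
    intro i t
    rw [hw]
    exact div_nonneg (Real.exp_pos _).le (hWpos t).le
  have hbdd : ∀ t, BddAbove (Set.range fun i : Fin N => |xh i t|) := fun t =>
    (Set.finite_range _).bddAbove
  have hy0 : ∀ t, 0 ≤ y t := by
    intro t
    rw [hy t]
    have h1 : |xh ⟨0, hN⟩ t| ≤ ⨆ i : Fin N, |xh i t| := le_ciSup (hbdd t) _
    have := abs_nonneg (xh ⟨0, hN⟩ t)
    have := abs_nonneg (x t)
    linarith
  -- one-step multiplicative bound
  have hstep : ∀ t, W (t+1) ≤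
      W t * Real.exp (-η * (x t - agg t)^2 + η * max ((y t)^2 - 1/(2*η)) 0) := by
    intro t
    have hq : ∀ i : Fin N, |xh i t - x t| ≤ y t := by
      intro i
      rw [hy t]
      calc |xh i t - x t| = |xh i t + -(x t)| := by rw [sub_eq_add_neg]
        _ ≤ |xh i t| + |(-(x t))| := abs_add_le _ _
        _ = |xh i t| + |x t| := by rw [abs_neg]
        _ ≤ (⨆ i : Fin N, |xh i t|) + |x t| := by
            have := le_ciSup (hbdd t) i; linarith
        _ = |x t| + ⨆ i : Fin N, |xh i t| := by ring
    have hmean : (∑ i, w i t * (xh i t - x t)) = agg t - x t := by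
      have h1 : (∑ i, w i t * (xh i t - x t))
          = (∑ i, w i t * xh i t) - (∑ i, w i t) * x t := by
        rw [Finset.sum_mul, ← Finset.sum_sub_distrib]
        apply Finset.sum_congr rfl
        intro i _
        ring
      rw [h1, hsumw t, hagg t]
      ring
    have hs := step hN hη (hy0 t) (fun i => xh i t - x t) (fun i => w i t)
      (fun i => hwnn i t) (hsumw t) hq
    rw [hmean] at hs
    have hsq : (agg t - x t)^2 = (x t - agg t)^2 := by ring
    rw [hsq] at hs
    calc W (t+1) = ∑ i, Real.exp (-η * ∑ s ∈ range t, (xh i s - x s)^2)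
          * Real.exp (-η * (xh i t - x t)^2) := by
          simp only [hWdef]
          apply Finset.sum_congr rfl
          intro i _
          rw [Finset.sum_range_succ, ← Real.exp_add]
          congr 1
          ring
      _ = W t * ∑ i, w i t * Real.exp (-η * (xh i t - x t)^2) := by
          rw [Finset.mul_sum]
          apply Finset.sum_congr rfl
          intro i _
          rw [hw i t]
          have hWne : W t ≠ 0 := ne_of_gt (hWpos t)
          have hgen : ∀ (Wt E F : ℝ), Wt ≠ 0 → Wt * (E / Wt * F) = E * F := by
            intros Wt E F h
            field_simp
          exact (hgen (W t) _ _ hWne).symm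
      _ ≤ W t * Real.exp (-η * (x t - agg t)^2 + η * max ((y t)^2 - 1/(2*η)) 0) :=
          mul_le_mul_of_nonneg_left hs (hWpos t).le
  -- logarithmic per-step
  have hlogstep : ∀ t, Real.log (W (t+1)) - Real.log (W t) ≤
      -η * (x t - agg t)^2 + η * max ((y t)^2 - 1/(2*η)) 0 := by
    intro t
    have h1 := Real.log_le_log (hWpos (t+1)) (hstep t)
    rw [Real.log_mul (ne_of_gt (hWpos t)) (ne_of_gt (Real.exp_pos _)),
      Real.log_exp] at h1
    linarith
  -- telescoping
  have htel : Real.log (W T) - Real.log (W 0)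
      = ∑ t ∈ range T, (Real.log (W (t+1)) - Real.log (W t)) := by
    rw [Finset.sum_range_sub (fun t => Real.log (W t))]
  have hsumineq : Real.log (W T) - Real.log (W 0) ≤
      ∑ t ∈ range T, (-η * (x t - agg t)^2 + η * max ((y t)^2 - 1/(2*η)) 0) := by
    rw [htel]
    exact Finset.sum_le_sum (fun t _ => hlogstep t)
  have hsplit : ∑ t ∈ range T, (-η * (x t - agg t)^2 + η * max ((y t)^2 - 1/(2*η)) 0)
      = -η * (∑ t ∈ range T, (x t - agg t)^2)
        + η * ∑ t ∈ range T, max ((y t)^2 - 1/(2*η)) 0 := by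
    rw [Finset.sum_add_distrib, ← Finset.mul_sum, ← Finset.mul_sum]
  have KK : η * (∑ t ∈ range T, (x t - agg t)^2) ≤
      Real.log N - Real.log (W T) + η * ∑ t ∈ range T, max ((y t)^2 - 1/(2*η)) 0 := by
    rw [hsplit] at hsumineq
    rw [hW0] at hsumineq
    linarith
  have hlogdiv : Real.log ((1/N) * W T) = Real.log (W T) - Real.log N := by
    rw [Real.log_mul (by positivity) (ne_of_gt (hWpos T)), one_div,
      Real.log_inv]
    ring
  constructor
  · -- first inequality
    have h1 : (∑ t ∈ range T, (x t - agg t)^2) ≤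
        (Real.log N - Real.log (W T) + η * ∑ t ∈ range T, max ((y t)^2 - 1/(2*η)) 0) / η := by
      rw [le_div_iff₀ hη]
      linarith [KK]
    have h2 := mul_le_mul_of_nonneg_left h1 (le_of_lt (by positivity : (0:ℝ) < 1/(T:ℝ)))
    calc (1/(T:ℝ)) * ∑ t ∈ range T, (x t - agg t)^2
        ≤ (1/(T:ℝ)) * ((Real.log N - Real.log (W T)
            + η * ∑ t ∈ range T, max ((y t)^2 - 1/(2*η)) 0) / η) := h2
      _ = -(1 / (η * T)) * Real.log ((1/N) * W T)
          + (1/(T:ℝ)) * ∑ t ∈ range T, max ((y t)^2 - 1/(2*η)) 0 := by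
          rw [hlogdiv]
          generalize ∑ t ∈ range T, max ((y t)^2 - 1/(2*η)) 0 = S
          field_simp
          ring
  · -- second inequality
    have h2 : ∀ j : Fin N, -(1 / (η * T)) * Real.log ((1/N) * W T) - Real.log N / (T*η)
        ≤ (1/(T:ℝ)) * ∑ t ∈ range T, (xh j t - x t)^2 := by
      intro j
      have hj : Real.exp (-η * ∑ t ∈ range T, (xh j t - x t)^2) ≤ W T := by
        apply Finset.single_le_sum (f := fun i : Fin N =>
          Real.exp (-η * ∑ t ∈ range T, (xh i t - x t)^2))
          (fun i _ => (Real.exp_pos _).le) (Finset.mem_univ j)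
      have hj2 : -η * ∑ t ∈ range T, (xh j t - x t)^2 ≤ Real.log (W T) := by
        rw [← Real.log_exp (-η * ∑ t ∈ range T, (xh j t - x t)^2)]
        exact Real.log_le_log (Real.exp_pos _) hj
      rw [hlogdiv]
      have hmul := mul_le_mul_of_nonneg_right hj2
        (le_of_lt (by positivity : (0:ℝ) < 1/(η*(T:ℝ))))
      have hid1 : (-η * ∑ t ∈ range T, (xh j t - x t)^2)*(1/(η*(T:ℝ)))
          = -((∑ t ∈ range T, (xh j t - x t)^2)*(1/(T:ℝ))) := by
        field_simp
      have hid2 : -(1/(η*(T:ℝ)))*(Real.log (W T) - Real.log N) - Real.log N/((T:ℝ)*η)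
          = -(Real.log (W T)*(1/(η*(T:ℝ)))) := by
        field_simp
        ring
      rw [hid2]
      rw [hid1] at hmul
      linarith
    have h3 := le_ciInf (fun j => h2 j)
    linarith [h3]
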